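/- arXiv:2406.16597 — 4 statements merged into one kernel-verified Lean document; each statement's English description precedes it below -/
import Mathlib

section
/- For every nonnegative integer n and every complex number x, if n is odd then x^n = 2^{-(n-1)} * sum over k from 0 to (n-1)/2 of binomial(n, (n-1)/2 - k) * T_{2k+1}(x), where T_m denotes the m-th Chebyshev polynomial of the first kind. -/
open Finset

lemma poly_key (m : ℕ) (y : ℂ) :
    (y + 1) ^ (2 * m + 1) =
      ∑ k ∈ range (m + 1), ((2 * m + 1).choose (m - k) : ℂ) * (y ^ (m - k) + y ^ (m + k + 1)) := by
  have h := add_pow y 1 (2 * m + 1)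
  simp only [one_pow, mul_one] at h
  have hr : 2 * m + 1 + 1 = (m + 1) + (m + 1) := by ring
  rw [h, hr, Finset.sum_range_add]
  rw [← Finset.sum_range_reflect (fun j => y ^ j * ((2 * m + 1).choose j : ℂ)) (m + 1)]
  rw [← Finset.sum_add_distrib]
  refine Finset.sum_congr rfl fun k hk => ?_
  have hk' : k ≤ m := Nat.lt_succ_iff.mp (Finset.mem_range.mp hk)
  have h1 : m + 1 - 1 - k = m - k := by omega
  have h2 : (2 * m + 1).choose (m + 1 + k) = (2 * m + 1).choose (m - k) := by
    rw [← Nat.choose_symm (by omega : m + 1 + k ≤ 2 * m + 1)]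
    congr 1; omega
  rw [h1, h2]
  ring

theorem chebyshev_odd_monomial (n : ℕ) (hn : Odd n) (x : ℂ) :
    x ^ n = (1 / 2 ^ (n - 1)) *
      ∑ k ∈ Finset.range ((n - 1) / 2 + 1),
        (n.choose ((n - 1) / 2 - k) : ℂ) * (Polynomial.Chebyshev.T ℂ (2 * k + 1)).eval x := by
  obtain ⟨m, rfl⟩ := hn
  obtain ⟨z, rfl⟩ := Complex.cos_surjective x
  have hn1 : 2 * m + 1 - 1 = 2 * m := by omega
  have hdiv : 2 * m / 2 = m := by omega
  rw [hn1, hdiv]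
  set a := Complex.exp (z * Complex.I) with ha_def
  have ha : a ≠ 0 := Complex.exp_ne_zero _
  have hcosk : ∀ j : ℕ, Complex.cos ((j : ℂ) * z) = (a ^ j + a⁻¹ ^ j) / 2 := by
    intro j
    rw [Complex.cos, ha_def, ← Complex.exp_neg, ← Complex.exp_nat_mul, ← Complex.exp_nat_mul]
    ring_nf
  have hcos : Complex.cos z = (a + a⁻¹) / 2 := by
    have := hcosk 1
    simpa using this
  have hT : ∀ k : ℕ, (Polynomial.Chebyshev.T ℂ (2 * (k : ℤ) + 1)).eval (Complex.cos z)
      = (a ^ (2 * k + 1) + a⁻¹ ^ (2 * k + 1)) / 2 := by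
    intro k
    rw [Polynomial.Chebyshev.T_complex_cos z (2 * k + 1)]
    have hc : ((2 * (k : ℤ) + 1 : ℤ) : ℂ) * z = ((2 * k + 1 : ℕ) : ℂ) * z := by push_cast; ring
    rw [hc, hcosk]
  have key2 : (a + a⁻¹) ^ (2 * m + 1) =
      ∑ k ∈ range (m + 1), ((2 * m + 1).choose (m - k) : ℂ) *
        (a ^ (2 * k + 1) + a⁻¹ ^ (2 * k + 1)) := by
    have hxa : a + a⁻¹ = (a ^ 2 + 1) / a := by field_simp
    rw [hxa, div_pow, poly_key m (a ^ 2), Finset.sum_div]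
    refine Finset.sum_congr rfl fun k hk => ?_
    have hk' : k ≤ m := Nat.lt_succ_iff.mp (Finset.mem_range.mp hk)
    rw [mul_div_assoc]
    congr 1
    rw [div_eq_iff (pow_ne_zero _ ha)]
    have h1 : (a ^ 2) ^ (m + k + 1) = a ^ (2 * k + 1) * a ^ (2 * m + 1) := by
      rw [← pow_mul, ← pow_add]; congr 1; omega
    have h2 : (a ^ 2) ^ (m - k) = a⁻¹ ^ (2 * k + 1) * a ^ (2 * m + 1) := by
      rw [← pow_mul, inv_pow, eq_comm, inv_mul_eq_iff_eq_mul₀ (pow_ne_zero _ ha), ← pow_add]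
      congr 1; omega
    rw [h1, h2]; ring
  rw [hcos, div_pow, key2, Finset.sum_div, Finset.mul_sum, ← hcos]
  refine Finset.sum_congr rfl fun k hk => ?_
  rw [hT k]
  rw [div_eq_iff (pow_ne_zero _ two_ne_zero)]
  have : (2:ℂ) ^ (2*m+1) = 2 ^ (2*m) * 2 := by rw [pow_succ]
  rw [this]
  field_simp
end

section
/- Let J be a compact subset of ℝ \ {0} and define φ(y,α) := -2α/(1-y)^2 + 2α/(1-y) - (2/α)·log(1-y) for y in [0,1). Then there is a constant C such that for all y in [0,1) and all α in J, the absolute value of the integral from y to 1 of e^{-iφ(x,α)} dx is at most C·(1-y)^3. -/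
open Complex

noncomputable def phase (y α : ℝ) : ℝ :=
  -2 * α / (1 - y) ^ 2 + 2 * α / (1 - y) - 2 / α * Real.log (1 - y)

noncomputable def DF (α x : ℝ) : ℝ :=
  (2*(1-x)^2 + 2*α^2*(1-x) - 4*α^2) / (α * (1-x)^3)

noncomputable def psiF (α x : ℝ) : ℝ :=
  α*(1-x)^3 / (2*(1-x)^2 + 2*α^2*(1-x) - 4*α^2)

noncomputable def EF (α x : ℝ) : ℝ :=
  -(α*(1-x)^2*(2*(1-x)^2+4*α^2*(1-x)-12*α^2)) / (2*(1-x)^2 + 2*α^2*(1-x) - 4*α^2)^2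

lemma hasDerivAt_phase (α x : ℝ) (hα : α ≠ 0) (hx : x < 1) :
    HasDerivAt (fun t => phase t α) (DF α x) x := by
  have h1 : (1 - x) ≠ 0 := by intro h; nlinarith
  have hu : HasDerivAt (fun t : ℝ => 1 - t) (-1) x := by
    simpa using (hasDerivAt_id x).const_sub 1
  have hu2 : HasDerivAt (fun t : ℝ => (1-t)^2) (2*(1-x)*(-1)) x := by
    simpa using hu.fun_pow 2
  have hA := (hasDerivAt_const x (-2*α)).div hu2 (pow_ne_zero 2 h1)
  have hB := (hasDerivAt_const x (2*α)).div hu h1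
  have hC := ((Real.hasDerivAt_log h1).comp x hu).const_mul (2/α)
  have h := (hA.add hB).sub hC
  refine h.congr_deriv ?_
  unfold DF
  field_simp
  ring

lemma hasDerivAt_psi (α x : ℝ) (hN : (2*(1-x)^2 + 2*α^2*(1-x) - 4*α^2) ≠ 0) :
    HasDerivAt (psiF α) (EF α x) x := by
  have hu : HasDerivAt (fun t : ℝ => 1 - t) (-1) x := by
    simpa using (hasDerivAt_id x).const_sub 1
  have hf : HasDerivAt (fun t : ℝ => α*(1-t)^3) (α*(3*(1-x)^2*(-1))) x := by
    simpa using (hu.pow 3).const_mul α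
  have hg : HasDerivAt (fun t : ℝ => 2*(1-t)^2 + 2*α^2*(1-t) - 4*α^2)
      (2*(2*(1-x)*(-1)) + 2*α^2*(-1)) x := by
    have h2 : HasDerivAt (fun t : ℝ => (1-t)^2) (2*(1-x)*(-1)) x := by simpa using hu.fun_pow 2
    simpa using ((h2.const_mul 2).add ((hu.const_mul (2*α^2)))).sub_const (4*α^2)
  have h := hf.div hg hN
  refine h.congr_deriv ?_
  unfold EF
  field_simp
  ring

lemma norm_f (r : ℝ) : ‖Complex.exp (-Complex.I * (r : ℂ))‖ = 1 := by
  rw [Complex.norm_exp]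
  simp

lemma f_intervalIntegrable (α a b : ℝ) :
    IntervalIntegrable (fun x => Complex.exp (-Complex.I * (phase x α : ℂ))) MeasureTheory.volume a b := by
  have hm : Measurable (fun x => Complex.exp (-Complex.I * (phase x α : ℂ))) := by
    apply Complex.measurable_exp.comp
    apply Measurable.const_mul
    apply Complex.measurable_ofReal.comp
    unfold phase
    have h1 : Measurable fun x : ℝ => (1 - x) := (measurable_const.sub measurable_id)
    exact (((measurable_const.div (h1.pow_const 2)).add
      (measurable_const.div h1)).sub ((Real.measurable_log.comp h1).const_mul (2 / α)))
  rw [intervalIntegrable_iff]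
  apply MeasureTheory.Integrable.mono' (g := fun _ => (1:ℝ))
  · exact MeasureTheory.integrableOn_const measure_Ioc_lt_top.ne
  · exact hm.aestronglyMeasurable
  · filter_upwards with x
    rw [norm_f]

set_option maxHeartbeats 1000000 in
lemma key (δ α y b : ℝ) (hδ : 0 < δ) (hα : δ ≤ |α|) (hyb : y ≤ b) (hb : b < 1)
    (hreg : 1 - y ≤ min (1/2) (δ^2)) :
    ‖∫ x in y..b, Complex.exp (-Complex.I * (phase x α : ℂ))‖ ≤ 2/δ * (1-y)^3 := by
  have hα0 : α ≠ 0 := by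
    intro h; rw [h] at hα; simp at hα; linarith
  have hαsq : 0 < α^2 := by positivity
  have hδsq : δ^2 ≤ α^2 := by
    have := _root_.sq_abs α
    nlinarith [abs_nonneg α]
  have huIcc : Set.uIcc y b = Set.Icc y b := Set.uIcc_of_le hyb
  -- pointwise facts on the interval
  have hfacts : ∀ x ∈ Set.uIcc y b, x < 1 ∧ 0 < 1 - x ∧ 1 - x ≤ 1 - y ∧
      2*(1-x)^2 + 2*α^2*(1-x) - 4*α^2 ≤ -2*α^2 ∧
      2*(1-x)^2 + 4*α^2*(1-x) - 12*α^2 ≤ -9*α^2 := by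
    intro x hx
    rw [huIcc, Set.mem_Icc] at hx
    have hx1 : x < 1 := lt_of_le_of_lt hx.2 hb
    have hu0 : 0 < 1 - x := by linarith
    have huy : 1 - x ≤ 1 - y := by linarith [hx.1]
    have hhalf : 1 - x ≤ 1/2 := le_trans huy (le_trans hreg (min_le_left _ _))
    have hua : 1 - x ≤ α^2 := le_trans huy (le_trans hreg (le_trans (min_le_right _ _) hδsq))
    refine ⟨hx1, hu0, huy, ?_, ?_⟩ <;> nlinarith
  have hNne : ∀ x ∈ Set.uIcc y b, (2*(1-x)^2 + 2*α^2*(1-x) - 4*α^2) ≠ 0 := by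
    intro x hx
    have := (hfacts x hx).2.2.2.1
    nlinarith
  set f : ℝ → ℂ := fun x => Complex.exp (-Complex.I * (phase x α : ℂ)) with hf
  -- derivative of f
  have hv : ∀ x ∈ Set.uIcc y b, HasDerivAt f ((-Complex.I * (DF α x : ℂ)) * f x) x := by
    intro x hx
    have hp := (hasDerivAt_phase α x hα0 (hfacts x hx).1).ofReal_comp
    have := ((hp.const_mul (-Complex.I)).cexp)
    convert this using 1
    ring
  have hu : ∀ x ∈ Set.uIcc y b, HasDerivAt (fun t => ((psiF α t : ℝ) : ℂ)) ((EF α x : ℂ)) x := by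
    intro x hx
    exact (hasDerivAt_psi α x (hNne x hx)).ofReal_comp
  -- continuity facts
  have hcont1 : ContinuousOn (fun x : ℝ => 2*(1-x)^2 + 2*α^2*(1-x) - 4*α^2) (Set.uIcc y b) :=
    (Continuous.continuousOn (by fun_prop))
  have hEcont : ContinuousOn (fun x => EF α x) (Set.uIcc y b) := by
    unfold EF
    exact ContinuousOn.div (Continuous.continuousOn (by fun_prop))
      (hcont1.pow 2) (fun x hx => pow_ne_zero 2 (hNne x hx))
  have hEint : IntervalIntegrable (fun x => EF α x) MeasureTheory.volume y b :=
    hEcont.intervalIntegrable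
  have hEcint : IntervalIntegrable (fun x => ((EF α x : ℝ) : ℂ)) MeasureTheory.volume y b :=
    (Complex.continuous_ofReal.comp_continuousOn hEcont).intervalIntegrable
  have hune : ∀ x ∈ Set.uIcc y b, (1 - x) ≠ 0 := fun x hx => ne_of_gt (hfacts x hx).2.1
  have hphasecont : ContinuousOn (fun x => phase x α) (Set.uIcc y b) := by
    unfold phase
    apply ContinuousOn.sub
    · apply ContinuousOn.add
      · exact ContinuousOn.div continuousOn_const (Continuous.continuousOn (by fun_prop))
          (fun x hx => pow_ne_zero 2 (hune x hx))
      · exact ContinuousOn.div continuousOn_const (Continuous.continuousOn (by fun_prop))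
          hune
    · exact ContinuousOn.mul continuousOn_const
        (ContinuousOn.log (Continuous.continuousOn (by fun_prop)) hune)
  have hfcont : ContinuousOn f (Set.uIcc y b) := by
    apply Complex.continuous_exp.comp_continuousOn
    exact (Complex.continuous_ofReal.comp_continuousOn hphasecont).const_smul (-Complex.I) |>.congr
      (fun x hx => by simp [smul_eq_mul])
  have hDcont : ContinuousOn (fun x => DF α x) (Set.uIcc y b) := by
    unfold DF
    exact ContinuousOn.div hcont1 (Continuous.continuousOn (by fun_prop))
      (fun x hx => mul_ne_zero hα0 (pow_ne_zero 3 (hune x hx)))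
  have hv'int : IntervalIntegrable (fun x => (-Complex.I * (DF α x : ℂ)) * f x)
      MeasureTheory.volume y b := by
    apply ContinuousOn.intervalIntegrable
    exact (((Complex.continuous_ofReal.comp_continuousOn hDcont).const_smul
      (-Complex.I)).congr (fun x hx => by simp [smul_eq_mul])).mul hfcont
  -- integration by parts
  have hIBP := intervalIntegral.integral_mul_deriv_eq_deriv_mul hu hv hEcint hv'int
  -- rewrite integrand
  have hid : ∀ x ∈ Set.uIcc y b, f x =
      Complex.I * (((psiF α x : ℝ) : ℂ) * ((-Complex.I * (DF α x : ℂ)) * f x)) := by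
    intro x hx
    have h1 : psiF α x * DF α x = 1 := by
      have hn := hNne x hx
      have hu1 : (1 - x) ≠ 0 := ne_of_gt (hfacts x hx).2.1
      unfold psiF DF
      rw [div_mul_div_comm, show α*(1-x)^3 * (2*(1-x)^2+2*α^2*(1-x)-4*α^2)
          = (2*(1-x)^2+2*α^2*(1-x)-4*α^2) * (α*(1-x)^3) from by ring,
        div_self (mul_ne_zero hn (mul_ne_zero hα0 (pow_ne_zero 3 hu1)))]
    have h1c : ((psiF α x : ℝ) : ℂ) * ((DF α x : ℝ) : ℂ) = 1 := by
      rw [← Complex.ofReal_mul, h1, Complex.ofReal_one]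
    calc f x = (((psiF α x : ℝ) : ℂ) * ((DF α x : ℝ) : ℂ)) * f x := by rw [h1c, one_mul]
    _ = Complex.I * (((psiF α x : ℝ) : ℂ) * ((-Complex.I * (DF α x : ℂ)) * f x)) := by
        ring_nf
        rw [Complex.I_sq]
        ring
  have hsplit : (∫ x in y..b, f x) =
      Complex.I * ∫ x in y..b, ((psiF α x : ℝ) : ℂ) * ((-Complex.I * (DF α x : ℂ)) * f x) := by
    rw [← intervalIntegral.integral_const_mul]
    apply intervalIntegral.integral_congr
    exact hid
  -- bound on |psiF|
  have hpsib : ∀ x ∈ Set.uIcc y b, |psiF α x| ≤ (1-y)^3 / (2*δ) := by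
    intro x hx
    obtain ⟨hx1, hu0, huy, hN, _⟩ := hfacts x hx
    have hy0 : 0 < 1 - y := lt_of_lt_of_le hu0 huy
    unfold psiF
    rw [abs_div, abs_mul]
    rw [abs_of_pos (show (0:ℝ) < (1-x)^3 by positivity)]
    have hNabs : 2*α^2 ≤ |2*(1-x)^2 + 2*α^2*(1-x) - 4*α^2| := by
      rw [abs_of_nonpos (by nlinarith)]
      linarith
    have hNpos : 0 < |2*(1-x)^2 + 2*α^2*(1-x) - 4*α^2| := lt_of_lt_of_le (by positivity) hNabs
    have hA : 0 < |α| := lt_of_lt_of_le hδ hα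
    have hA2 : |α|^2 = α^2 := _root_.sq_abs α
    have hy3 : (1-x)^3 ≤ (1-y)^3 := pow_le_pow_left₀ hu0.le huy 3
    rw [div_le_div_iff₀ hNpos (by positivity)]
    calc |α| * (1-x)^3 * (2*δ) ≤ |α| * (1-x)^3 * (2*|α|) := by
          apply mul_le_mul_of_nonneg_left (by linarith) (by positivity)
      _ = 2*α^2*(1-x)^3 := by rw [← hA2]; ring
      _ ≤ 2*α^2*(1-y)^3 := by nlinarith
      _ ≤ (1-y)^3 * |2*(1-x)^2 + 2*α^2*(1-x) - 4*α^2| := by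
          nlinarith [mul_le_mul_of_nonneg_left hNabs (pow_nonneg hy0.le 3)]
  -- FTC for EF
  have hFTC : (∫ x in y..b, EF α x) = psiF α b - psiF α y :=
    intervalIntegral.integral_eq_sub_of_hasDerivAt (fun x hx => hasDerivAt_psi α x (hNne x hx)) hEint
  have h2 : ∀ x ∈ Set.uIcc y b, ‖((EF α x : ℝ) : ℂ) * f x‖ = |EF α x| := by
    intro x hx
    rw [norm_mul, hf]
    simp only []
    rw [norm_f, mul_one, Complex.norm_real, Real.norm_eq_abs]
  have hEbound : ‖∫ x in y..b, ((EF α x : ℝ) : ℂ) * f x‖ ≤ |psiF α y| + |psiF α b| := by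
    have h1 : ‖∫ x in y..b, ((EF α x : ℝ) : ℂ) * f x‖ ≤ ∫ x in y..b, ‖((EF α x : ℝ) : ℂ) * f x‖ :=
      intervalIntegral.norm_integral_le_integral_norm hyb
    rcases lt_or_gt_of_ne hα0 with hneg | hpos
    · -- α < 0 : EF ≤ 0
      have hE : ∀ x ∈ Set.uIcc y b, EF α x ≤ 0 := by
        intro x hx
        obtain ⟨hx1, hu0, huy, hN, hP⟩ := hfacts x hx
        unfold EF
        apply div_nonpos_of_nonpos_of_nonneg _ (sq_nonneg _)
        have h9 : (0:ℝ) ≤ -(2*(1-x)^2+4*α^2*(1-x)-12*α^2) := by nlinarith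
        nlinarith [mul_nonneg (mul_nonneg (neg_nonneg.2 hneg.le) (sq_nonneg (1-x))) h9]
      have heq : (∫ x in y..b, ‖((EF α x : ℝ) : ℂ) * f x‖) = ∫ x in y..b, (-EF α x) :=
        intervalIntegral.integral_congr (fun x hx => by
          rw [h2 x hx, abs_of_nonpos (hE x hx)])
      rw [heq, intervalIntegral.integral_neg, hFTC] at h1
      calc ‖∫ x in y..b, ((EF α x : ℝ) : ℂ) * f x‖ ≤ -(psiF α b - psiF α y) := h1
        _ ≤ |psiF α y| + |psiF α b| := by
            have := abs_le.1 (le_refl |psiF α y|) -- dummy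
            have h3 := neg_abs_le (psiF α b)
            have h4 := le_abs_self (psiF α y)
            linarith
    · -- α > 0 : EF ≥ 0
      have hE : ∀ x ∈ Set.uIcc y b, 0 ≤ EF α x := by
        intro x hx
        obtain ⟨hx1, hu0, huy, hN, hP⟩ := hfacts x hx
        unfold EF
        apply div_nonneg _ (sq_nonneg _)
        have h9 : (0:ℝ) ≤ -(2*(1-x)^2+4*α^2*(1-x)-12*α^2) := by nlinarith
        nlinarith [mul_nonneg (mul_nonneg hpos.le (sq_nonneg (1-x))) h9]
      have heq : (∫ x in y..b, ‖((EF α x : ℝ) : ℂ) * f x‖) = ∫ x in y..b, EF α x :=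
        intervalIntegral.integral_congr (fun x hx => by
          rw [h2 x hx, _root_.abs_of_nonneg (hE x hx)])
      rw [heq, hFTC] at h1
      calc ‖∫ x in y..b, ((EF α x : ℝ) : ℂ) * f x‖ ≤ psiF α b - psiF α y := h1
        _ ≤ |psiF α y| + |psiF α b| := by
            have h3 := le_abs_self (psiF α b)
            have h4 := neg_abs_le (psiF α y)
            linarith
  -- assemble
  have hyIn : y ∈ Set.uIcc y b := by rw [huIcc]; exact Set.left_mem_Icc.2 hyb
  have hbIn : b ∈ Set.uIcc y b := by rw [huIcc]; exact Set.right_mem_Icc.2 hyb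
  have habs_y := hpsib y hyIn
  have habs_b := hpsib b hbIn
  have hnorm_y : ‖((psiF α y : ℝ) : ℂ) * f y‖ = |psiF α y| := by
    rw [norm_mul, hf]; simp only []; rw [norm_f, mul_one, Complex.norm_real, Real.norm_eq_abs]
  have hnorm_b : ‖((psiF α b : ℝ) : ℂ) * f b‖ = |psiF α b| := by
    rw [norm_mul, hf]; simp only []; rw [norm_f, mul_one, Complex.norm_real, Real.norm_eq_abs]
  rw [hsplit, hIBP, norm_mul, Complex.norm_I, one_mul]
  have htri : ‖((psiF α b : ℝ) : ℂ) * f b - ((psiF α y : ℝ) : ℂ) * f y -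
      ∫ x in y..b, ((EF α x : ℝ) : ℂ) * f x‖ ≤
      |psiF α b| + |psiF α y| + (|psiF α y| + |psiF α b|) := by
    calc ‖((psiF α b : ℝ) : ℂ) * f b - ((psiF α y : ℝ) : ℂ) * f y -
        ∫ x in y..b, ((EF α x : ℝ) : ℂ) * f x‖
        ≤ ‖((psiF α b : ℝ) : ℂ) * f b - ((psiF α y : ℝ) : ℂ) * f y‖ +
          ‖∫ x in y..b, ((EF α x : ℝ) : ℂ) * f x‖ := norm_sub_le _ _
      _ ≤ ‖((psiF α b : ℝ) : ℂ) * f b‖ + ‖((psiF α y : ℝ) : ℂ) * f y‖ +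
          ‖∫ x in y..b, ((EF α x : ℝ) : ℂ) * f x‖ := by
            have := norm_sub_le (((psiF α b : ℝ) : ℂ) * f b) (((psiF α y : ℝ) : ℂ) * f y)
            linarith
      _ ≤ |psiF α b| + |psiF α y| + (|psiF α y| + |psiF α b|) := by
            rw [hnorm_y, hnorm_b]
            linarith [hEbound]
  have hfinal : |psiF α b| + |psiF α y| + (|psiF α y| + |psiF α b|) ≤ 2/δ * (1-y)^3 := by
    have h4 : (4:ℝ) * ((1-y)^3/(2*δ)) = 2/δ * (1-y)^3 := by
      field_simp
      ring
    linarith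
  linarith [htri, hfinal]


theorem oscillatory_integral_bound (J : Set ℝ) (hJ : IsCompact J) (hJ0 : (0 : ℝ) ∉ J) :
    ∃ C : ℝ, ∀ y ∈ Set.Ico (0 : ℝ) 1, ∀ α ∈ J,
      ‖∫ x in y..1, Complex.exp (-Complex.I * (phase x α : ℂ))‖ ≤ C * (1 - y) ^ 3 := by
  rcases J.eq_empty_or_nonempty with hJe | hne
  · exact ⟨0, fun y hy α hα => by simp [hJe] at hα⟩
  obtain ⟨α₀, hα₀J, hmin'⟩ := hJ.exists_isMinOn hne continuous_abs.continuousOn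
  have hmin : ∀ α ∈ J, |α₀| ≤ |α| := fun α hα => hmin' hα
  set δ := |α₀| with hδdef
  have hδ : 0 < δ := abs_pos.2 (fun h => hJ0 (h ▸ hα₀J))
  set u₁ := min (1/2 : ℝ) (δ^2) with hu₁
  have hu₁pos : 0 < u₁ := lt_min (by norm_num) (by positivity)
  refine ⟨2/δ + 1/u₁^2, ?_⟩
  rintro y ⟨hy0, hy1⟩ α hαJ
  have hα : δ ≤ |α| := hmin α hαJ
  have h1y : 0 < 1 - y := by linarith
  have hC0 : (0:ℝ) ≤ 2/δ := by positivity
  have hC1 : (0:ℝ) ≤ 1/u₁^2 := by positivity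
  have hy3 : (0:ℝ) ≤ (1-y)^3 := by positivity
  by_cases hcase : 1 - y ≤ u₁
  · have hmain : ‖∫ x in y..1, Complex.exp (-Complex.I * (phase x α : ℂ))‖
        ≤ 2/δ * (1-y)^3 := by
      apply le_of_forall_pos_le_add
      intro ε hε
      set b := max y (1 - ε) with hbdef
      have hyb : y ≤ b := le_max_left _ _
      have hb1 : b < 1 := max_lt hy1 (by linarith)
      have h1b : 1 - b ≤ ε := by
        rcases le_total y (1-ε) with h | h
        · rw [hbdef, max_eq_right h]; linarith
        · rw [hbdef, max_eq_left h]; linarith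
      have hsplit : (∫ x in y..1, Complex.exp (-Complex.I * (phase x α : ℂ)))
          = (∫ x in y..b, Complex.exp (-Complex.I * (phase x α : ℂ)))
          + (∫ x in b..1, Complex.exp (-Complex.I * (phase x α : ℂ))) :=
        (intervalIntegral.integral_add_adjacent_intervals (f_intervalIntegrable α y b)
          (f_intervalIntegrable α b 1)).symm
      rw [hsplit]
      have h2 := key δ α y b hδ hα hyb hb1 hcase
      have h3 : ‖∫ x in b..1, Complex.exp (-Complex.I * (phase x α : ℂ))‖ ≤ 1 - b := by
        have h4 := intervalIntegral.norm_integral_le_of_norm_le_const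
          (f := fun x => Complex.exp (-Complex.I * (phase x α : ℂ))) (C := 1) (a := b) (b := 1)
          (fun x hx => le_of_eq (norm_f _))
        rw [_root_.abs_of_nonneg (by linarith : (0:ℝ) ≤ 1 - b), one_mul] at h4
        exact h4
      calc ‖(∫ x in y..b, Complex.exp (-Complex.I * (phase x α : ℂ)))
          + (∫ x in b..1, Complex.exp (-Complex.I * (phase x α : ℂ)))‖
          ≤ ‖∫ x in y..b, Complex.exp (-Complex.I * (phase x α : ℂ))‖
            + ‖∫ x in b..1, Complex.exp (-Complex.I * (phase x α : ℂ))‖ := norm_add_le _ _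
        _ ≤ 2/δ*(1-y)^3 + ε := by linarith
    nlinarith [mul_nonneg hC1 hy3]
  · push_neg at hcase
    have h3 : ‖∫ x in y..1, Complex.exp (-Complex.I * (phase x α : ℂ))‖ ≤ 1 - y := by
      have h4 := intervalIntegral.norm_integral_le_of_norm_le_const
        (f := fun x => Complex.exp (-Complex.I * (phase x α : ℂ))) (C := 1) (a := y) (b := 1)
        (fun x hx => le_of_eq (norm_f _))
      rw [_root_.abs_of_nonneg (by linarith : (0:ℝ) ≤ 1 - y), one_mul] at h4
      exact h4
    have ht : u₁^2 ≤ (1-y)^2 := by nlinarith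
    have h5 : 1 - y ≤ 1/u₁^2 * (1-y)^3 := by
      rw [one_div, inv_mul_eq_div, le_div_iff₀ (by positivity)]
      nlinarith [mul_le_mul_of_nonneg_left ht h1y.le]
    nlinarith [mul_nonneg hC0 hy3]
end

section
/- Let a < b, f continuous on [a,b], g continuously differentiable and real-valued on [a,b] with |g'| > 0 on [a,b], and p a polynomial with complex coefficients of degree d. Then the absolute value of ∫_a^b e^{ig(x)} f(x) dx − e^{ig(a)}·sum_{k=0}^{d} i^{k+1} p^{(k)}(g(a)) + e^{ig(b)}·sum_{k=0}^{d} i^{k+1} p^{(k)}(g(b)) is at most the L^1 norm on (a,b) of f − (p∘g)·g'. -/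
open Complex Finset

theorem oscillatory_polynomial_approx (a b : ℝ) (hab : a < b)
    (f : ℝ → ℂ) (hf : ContinuousOn f (Set.Icc a b))
    (g g' : ℝ → ℝ) (hg : ∀ x ∈ Set.Icc a b, HasDerivAt g (g' x) x)
    (hg' : ContinuousOn g' (Set.Icc a b))
    (hg'0 : ∀ x ∈ Set.Icc a b, g' x ≠ 0)
    (p : Polynomial ℂ) :
    ‖(∫ x in a..b, Complex.exp (Complex.I * (g x : ℂ)) * f x) -
        Complex.exp (Complex.I * (g a : ℂ)) *
          (∑ k ∈ Finset.range (p.natDegree + 1),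
            Complex.I ^ (k + 1) * ((Polynomial.derivative)^[k] p).eval ((g a : ℂ))) +
        Complex.exp (Complex.I * (g b : ℂ)) *
          (∑ k ∈ Finset.range (p.natDegree + 1),
            Complex.I ^ (k + 1) * ((Polynomial.derivative)^[k] p).eval ((g b : ℂ)))‖ ≤
      ∫ x in a..b, ‖f x - (p.eval ((g x : ℂ))) * (g' x : ℂ)‖ := by
  set n := p.natDegree with hn
  set Q : ℂ → ℂ := fun z =>
    -∑ k ∈ Finset.range (n+1), Complex.I ^ (k+1) * ((Polynomial.derivative)^[k] p).eval z
    with hQdef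
  set Q1 : ℂ → ℂ := fun z =>
    -∑ k ∈ Finset.range (n+1), Complex.I ^ (k+1) * ((Polynomial.derivative)^[k+1] p).eval z
    with hQ1def
  have key : ∀ y : ℂ, Complex.I * Q y + Q1 y = p.eval y := by
    intro y
    have h0 : ((Polynomial.derivative)^[n+1] p) = 0 :=
      Polynomial.iterate_derivative_eq_zero (by omega)
    have e1 : ∀ k : ℕ, Complex.I * (Complex.I ^ (k+1) *
        ((Polynomial.derivative)^[k] p).eval y) =
        -(Complex.I ^ k * ((Polynomial.derivative)^[k] p).eval y) := by
      intro k
      have : Complex.I * Complex.I ^ (k+1) = -(Complex.I ^ k) := by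
        rw [pow_succ, ← mul_assoc, mul_comm Complex.I, mul_assoc, Complex.I_mul_I]
        ring
      rw [← mul_assoc, this]; ring
    have : Complex.I * Q y + Q1 y =
        ∑ k ∈ Finset.range (n+1),
          (Complex.I ^ k * ((Polynomial.derivative)^[k] p).eval y -
            Complex.I ^ (k+1) * ((Polynomial.derivative)^[k+1] p).eval y) := by
      rw [hQdef, hQ1def]
      simp only [mul_neg, Finset.mul_sum, Finset.sum_sub_distrib]
      rw [Finset.sum_congr rfl (fun k _ => e1 k)]
      simp only [Finset.sum_neg_distrib, neg_neg]
      ring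
    rw [this, Finset.sum_range_sub' (fun k => Complex.I ^ k *
      ((Polynomial.derivative)^[k] p).eval y)]
    simp [h0]
  have hQd : ∀ z : ℂ, HasDerivAt Q (Q1 z) z := by
    intro z
    simp only [hQdef, hQ1def]
    apply HasDerivAt.neg
    apply HasDerivAt.fun_sum
    intro k _
    rw [Function.iterate_succ_apply' Polynomial.derivative k p]
    exact (Polynomial.hasDerivAt ((Polynomial.derivative)^[k] p) z).const_mul _
  set F : ℝ → ℂ := fun x => Complex.exp (Complex.I * (g x : ℂ)) * Q ((g x : ℂ)) with hFdef
  set φ : ℝ → ℂ := fun x =>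
    Complex.exp (Complex.I * (g x : ℂ)) * (p.eval ((g x : ℂ)) * (g' x : ℂ)) with hφdef
  have huIcc : Set.uIcc a b = Set.Icc a b := Set.uIcc_of_le hab.le
  have hF : ∀ x ∈ Set.uIcc a b, HasDerivAt F (φ x) x := by
    intro x hx
    rw [huIcc] at hx
    have h1 : HasDerivAt (fun x : ℝ => ((g x : ℂ))) (g' x : ℂ) x := (hg x hx).ofReal_comp
    have h2 : HasDerivAt (fun x : ℝ => Complex.exp (Complex.I * (g x : ℂ)))
        (Complex.exp (Complex.I * (g x : ℂ)) * (Complex.I * (g' x : ℂ))) x :=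
      (h1.const_mul Complex.I).cexp
    have h3 : HasDerivAt (fun x : ℝ => Q ((g x : ℂ))) (Q1 ((g x : ℂ)) * (g' x : ℂ)) x :=
      (hQd _).comp x h1
    have h4 := h2.mul h3
    convert h4 using 1
    · rfl
    · rfl
    have hk := key ((g x : ℂ))
    rw [hφdef]
    simp only
    rw [← hk]; ring
  have hg_cont : ContinuousOn g (Set.Icc a b) := fun x hx =>
    (hg x hx).continuousAt.continuousWithinAt
  have hgC : ContinuousOn (fun x => ((g x : ℂ))) (Set.Icc a b) :=
    Complex.continuous_ofReal.comp_continuousOn hg_cont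
  have hcontφ : ContinuousOn φ (Set.Icc a b) := by
    apply ContinuousOn.mul
    · exact Complex.continuous_exp.comp_continuousOn (continuousOn_const.mul hgC)
    · exact (p.continuous.comp_continuousOn hgC).mul
        (Complex.continuous_ofReal.comp_continuousOn hg')
  have hintφ : IntervalIntegrable φ MeasureTheory.volume a b :=
    (hcontφ.mono (by rw [huIcc])).intervalIntegrable
  have hcontef : ContinuousOn (fun x => Complex.exp (Complex.I * (g x : ℂ)) * f x)
      (Set.Icc a b) :=
    (Complex.continuous_exp.comp_continuousOn (continuousOn_const.mul hgC)).mul hf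
  have hintef : IntervalIntegrable (fun x => Complex.exp (Complex.I * (g x : ℂ)) * f x)
      MeasureTheory.volume a b :=
    (hcontef.mono (by rw [huIcc])).intervalIntegrable
  have hFTC : ∫ x in a..b, φ x = F b - F a :=
    intervalIntegral.integral_eq_sub_of_hasDerivAt hF hintφ
  have hexpr : (∫ x in a..b, Complex.exp (Complex.I * (g x : ℂ)) * f x) -
        Complex.exp (Complex.I * (g a : ℂ)) *
          (∑ k ∈ Finset.range (n + 1),
            Complex.I ^ (k + 1) * ((Polynomial.derivative)^[k] p).eval ((g a : ℂ))) +
        Complex.exp (Complex.I * (g b : ℂ)) *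
          (∑ k ∈ Finset.range (n + 1),
            Complex.I ^ (k + 1) * ((Polynomial.derivative)^[k] p).eval ((g b : ℂ))) =
      ∫ x in a..b, (Complex.exp (Complex.I * (g x : ℂ)) * f x - φ x) := by
    rw [intervalIntegral.integral_sub hintef hintφ, hFTC, hFdef]
    simp only [hQdef]
    ring
  rw [hexpr]
  calc ‖∫ x in a..b, (Complex.exp (Complex.I * (g x : ℂ)) * f x - φ x)‖ ≤
      ∫ x in a..b, ‖Complex.exp (Complex.I * (g x : ℂ)) * f x - φ x‖ :=
        intervalIntegral.norm_integral_le_integral_norm hab.le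
    _ = ∫ x in a..b, ‖f x - (p.eval ((g x : ℂ))) * (g' x : ℂ)‖ := by
        apply intervalIntegral.integral_congr
        intro x _
        have h1 : Complex.exp (Complex.I * (g x : ℂ)) * f x - φ x =
            Complex.exp (Complex.I * (g x : ℂ)) *
              (f x - (p.eval ((g x : ℂ))) * (g' x : ℂ)) := by
          rw [hφdef]; ring
        have h2 : ‖Complex.exp (Complex.I * (g x : ℂ))‖ = 1 := by
          rw [Complex.norm_exp]
          simp [Complex.mul_re]
        simp only [h1, norm_mul, h2, one_mul]
end

section
/- Define the norms ‖f‖_X := sup_{y∈(-1,1)}(1-y^2)|f'(y)| + ‖f‖_{L^∞(-1,1)} and ‖g‖_Y := sup_{y∈(-1,1)}(1+y)(1-y)^2|g(y)|. Suppose f_1, f_{-1}: (-1,1) → ℂ are continuously differentiable with |f_{-1}(y)| ≤ C, |f_{-1}'(y)| ≤ C(1-y)^{-2}, |f_1(y)| ≤ C(1+y)^{-1}, |f_1'(y)| ≤ C(1+y)^{-2}, and W_*: (-1,1) → ℂ satisfies |W_*(y)| ≥ c(1-y^2)^{-2} with c > 0. Then the operator T(g)(y) := f_{-1}(y)∫_y^1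 (f_1(x)/W_*(x)) g(x) dx + f_1(y)∫_{-1}^y (f_{-1}(x)/W_*(x)) g(x) dx satisfies ‖T(g)‖_X ≤ C' ‖g‖_Y for a constant C' depending only on C and c, for all g with ‖g‖_Y < ∞. -/
open Set

noncomputable def Xnorm (f : ℝ → ℂ) : ℝ :=
  sSup ((fun y => (1 - y ^ 2) * ‖deriv f y‖) '' Set.Ioo (-1 : ℝ) 1) +
    sSup ((fun y => ‖f y‖) '' Set.Ioo (-1 : ℝ) 1)

noncomputable def Ynorm (g : ℝ → ℂ) : ℝ :=
  sSup ((fun y => (1 + y) * (1 - y) ^ 2 * ‖g y‖) '' Set.Ioo (-1 : ℝ) 1)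

/-- The variation-of-constants operator `T`. -/
noncomputable def varConst (f₁ fm₁ W g : ℝ → ℂ) (y : ℝ) : ℂ :=
  fm₁ y * (∫ x in y..1, f₁ x / W x * g x) + f₁ y * ∫ x in (-1)..y, fm₁ x / W x * g x

open MeasureTheory Filter Topology intervalIntegral

private lemma ae_ne_endpoints : ∀ᵐ x : ℝ, x ∉ ({1, -1} : Set ℝ) := by
  have h : (volume : Measure ℝ) ({1, -1} : Set ℝ) = 0 :=
    (Set.to_countable _).measure_zero _
  exact measure_eq_zero_iff_ae_notMem.mp h

/-- Norm bound for interval integrals of functions bounded on `Ioo (-1) 1`. -/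
private lemma aux_norm_le {h : ℝ → ℂ} {a b K : ℝ} (hab : a ≤ b) (h1 : (-1:ℝ) ≤ a)
    (h2 : b ≤ 1) (hbd : ∀ x ∈ Set.Ioo (-1:ℝ) 1, ‖h x‖ ≤ K) :
    ‖∫ x in a..b, h x‖ ≤ K * (b - a) := by
  have hmain : ‖∫ x in a..b, h x‖ ≤ K * |b - a| := by
    apply intervalIntegral.norm_integral_le_of_norm_le_const_ae
    filter_upwards [ae_ne_endpoints] with x hx hxm
    rw [Set.uIoc_of_le hab] at hxm
    simp only [Set.mem_insert_iff, Set.mem_singleton_iff, not_or] at hx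
    refine hbd x ⟨by linarith [hxm.1], lt_of_le_of_ne (le_trans hxm.2 h2) hx.1⟩
  rwa [abs_of_nonneg (by linarith)] at hmain

private lemma aux_tail_integrable {h : ℝ → ℂ} {y K : ℝ} (hy : y ∈ Set.Ioo (-1:ℝ) 1)
    (hbd : ∀ x ∈ Set.Ioo (-1:ℝ) 1, ‖h x‖ ≤ K)
    (hint : ∀ z ∈ Set.Ioo y 1, IntegrableOn h (Set.Ioc z 1)) :
    IntegrableOn h (Set.Ioc y 1) := by
  obtain ⟨hy1, hy2⟩ := hy
  set z : ℕ → ℝ := fun n => y + (1 - y) / (n + 2) with hz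
  have hq : 0 < 1 - y := by linarith
  have hzmem : ∀ n, z n ∈ Set.Ioo y 1 := by
    intro n
    constructor
    · have : 0 < (1 - y) / (n + 2) := by positivity
      simp only [hz]; linarith
    · have h2 : (1 - y) / (n + 2) < 1 - y := by
        rw [div_lt_iff₀ (by positivity)]
        nlinarith [Nat.cast_nonneg (α := ℝ) n]
      simp only [hz]; linarith
  have hU : Set.Ioc y 1 = ⋃ n, Set.Ioc (z n) 1 := by
    ext x
    simp only [Set.mem_Ioc, Set.mem_iUnion]
    constructor
    · rintro ⟨hx1, hx2⟩
      obtain ⟨n, hn⟩ := exists_nat_gt ((1 - y) / (x - y))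
      refine ⟨n, ?_, hx2⟩
      have hxy : 0 < x - y := by linarith
      have h3 : (1 - y) / (x - y) < (n : ℝ) + 2 := by
        have : (0:ℝ) ≤ n := Nat.cast_nonneg n
        linarith
      have h4 : (1 - y) / ((n : ℝ) + 2) < x - y := by
        rw [div_lt_iff₀ (by positivity)]
        rw [div_lt_iff₀ hxy] at h3
        nlinarith
      simp only [hz]; linarith
    · rintro ⟨n, hn1, hn2⟩
      exact ⟨lt_trans (hzmem n).1 hn1, hn2⟩
  have hmeas : AEStronglyMeasurable h (volume.restrict (Set.Ioc y 1)) := by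
    rw [hU]
    exact aestronglyMeasurable_iUnion_iff.mpr fun n => (hint _ (hzmem n)).aestronglyMeasurable
  have hKint : IntegrableOn (fun _ => K) (Set.Ioc y 1) volume :=
    integrableOn_const measure_Ioc_lt_top.ne
  refine Integrable.mono' hKint hmeas ?_
  filter_upwards [ae_restrict_of_ae ae_ne_endpoints, ae_restrict_mem measurableSet_Ioc]
    with x hx1 hx2
  simp only [Set.mem_insert_iff, Set.mem_singleton_iff, not_or] at hx1
  exact hbd x ⟨by linarith [hx2.1], lt_of_le_of_ne hx2.2 hx1.1⟩

private lemma deriv_norm_le {φ : ℝ → ℂ} {y L : ℝ} (hL : 0 ≤ L)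
    (h : DifferentiableAt ℝ φ y → ∀ᶠ y' in 𝓝[>] y, ‖φ y' - φ y‖ ≤ L * (y' - y)) :
    ‖deriv φ y‖ ≤ L := by
  by_cases hd : DifferentiableAt ℝ φ y
  · have hslope := hasDerivAt_iff_tendsto_slope.mp hd.hasDerivAt
    have h2 : Tendsto (slope φ y) (𝓝[>] y) (𝓝 (deriv φ y)) :=
      hslope.mono_left (nhdsWithin_mono _ (fun x hx => ne_of_gt hx))
    refine le_of_tendsto h2.norm ?_
    filter_upwards [h hd, self_mem_nhdsWithin] with y' h1 h2'
    have hy' : y < y' := h2'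
    have hpos : 0 < y' - y := by linarith
    rw [slope_def_module, norm_smul, norm_inv, Real.norm_eq_abs, abs_of_pos hpos]
    calc (y' - y)⁻¹ * ‖φ y' - φ y‖ ≤ (y' - y)⁻¹ * (L * (y' - y)) := by
          exact mul_le_mul_of_nonneg_left h1 (by positivity)
      _ = L := by field_simp
  · simp [deriv_zero_of_not_differentiableAt hd, hL]

set_option maxHeartbeats 1000000 in
theorem variation_of_constants_bound (C c : ℝ) (hC : 0 < C) (hc : 0 < c) :
    ∃ C' : ℝ, 0 < C' ∧ ∀ f₁ fm₁ W g : ℝ → ℂ,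
      (∀ y ∈ Set.Ioo (-1 : ℝ) 1, DifferentiableAt ℝ f₁ y) →
      (∀ y ∈ Set.Ioo (-1 : ℝ) 1, DifferentiableAt ℝ fm₁ y) →
      ContinuousOn (deriv f₁) (Set.Ioo (-1 : ℝ) 1) →
      ContinuousOn (deriv fm₁) (Set.Ioo (-1 : ℝ) 1) →
      (∀ y ∈ Set.Ioo (-1 : ℝ) 1,
        ‖fm₁ y‖ ≤ C ∧ ‖deriv fm₁ y‖ ≤ C * ((1 - y) ^ 2)⁻¹ ∧
        ‖f₁ y‖ ≤ C * (1 + y)⁻¹ ∧ ‖deriv f₁ y‖ ≤ C * ((1 + y) ^ 2)⁻¹) →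
      (∀ y ∈ Set.Ioo (-1 : ℝ) 1, c * (((1 - y ^ 2) ^ 2)⁻¹) ≤ ‖W y‖) →
      ContinuousOn g (Set.Ioo (-1 : ℝ) 1) →
      BddAbove ((fun y => (1 + y) * (1 - y) ^ 2 * ‖g y‖) '' Set.Ioo (-1 : ℝ) 1) →
      Xnorm (varConst f₁ fm₁ W g) ≤ C' * Ynorm g := by
  refine ⟨25 * C ^ 2 / c, div_pos (by nlinarith [mul_pos hC hC]) hc, ?_⟩
  intro f₁ fm₁ W g hdf hdm hcf hcm hbnd hW hg hbdd
  set M := Ynorm g with hMdef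
  have hgbd : ∀ x ∈ Set.Ioo (-1:ℝ) 1, (1 + x) * (1 - x) ^ 2 * ‖g x‖ ≤ M :=
    fun x hx => le_csSup hbdd ⟨x, hx, rfl⟩
  have hM0 : 0 ≤ M := le_trans (by positivity) (hgbd 0 (by norm_num))
  set K₁ := C * M / c with hK₁def
  set K₂ := 2 * C * M / c with hK₂def
  have hK₁0 : 0 ≤ K₁ := div_nonneg (mul_nonneg hC.le hM0) hc.le
  have hK₂0 : 0 ≤ K₂ := div_nonneg (mul_nonneg (by linarith) hM0) hc.le
  set h₁ : ℝ → ℂ := fun x => f₁ x / W x * g x with hh₁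
  set h₂ : ℝ → ℂ := fun x => fm₁ x / W x * g x with hh₂
  -- pointwise bounds on the integrands
  have hnorm_eq : ∀ (u : ℝ → ℂ) (x : ℝ), ‖u x / W x * g x‖ = ‖u x‖ * ‖W x‖⁻¹ * ‖g x‖ := by
    intro u x; rw [norm_mul, norm_div, div_eq_mul_inv]
  have hWinv : ∀ x ∈ Set.Ioo (-1:ℝ) 1, ‖W x‖⁻¹ ≤ (1 + x) ^ 2 * (1 - x) ^ 2 / c := by
    intro x hx
    obtain ⟨hx1, hx2⟩ := hx
    have hp : 0 < 1 + x := by linarith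
    have hq : 0 < 1 - x := by linarith
    have hWx : c * (((1 + x) ^ 2 * (1 - x) ^ 2))⁻¹ ≤ ‖W x‖ := by
      have h0 := hW x ⟨hx1, hx2⟩
      have he : (1 - x ^ 2) ^ 2 = (1 + x) ^ 2 * (1 - x) ^ 2 := by ring
      rwa [he] at h0
    have hpos : 0 < c * (((1 + x) ^ 2 * (1 - x) ^ 2))⁻¹ := by positivity
    calc ‖W x‖⁻¹ ≤ (c * (((1 + x) ^ 2 * (1 - x) ^ 2))⁻¹)⁻¹ :=
          inv_anti₀ hpos hWx
      _ = (1 + x) ^ 2 * (1 - x) ^ 2 / c := by field_simp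
  have hgx : ∀ x ∈ Set.Ioo (-1:ℝ) 1, ‖g x‖ ≤ M / ((1 + x) * (1 - x) ^ 2) := by
    intro x hx
    obtain ⟨hx1, hx2⟩ := hx
    have hp : 0 < 1 + x := by linarith
    have hq : 0 < 1 - x := by linarith
    rw [le_div_iff₀ (by positivity)]
    calc ‖g x‖ * ((1 + x) * (1 - x) ^ 2) = (1 + x) * (1 - x) ^ 2 * ‖g x‖ := by ring
      _ ≤ M := hgbd x ⟨hx1, hx2⟩
  have hb₁ : ∀ x ∈ Set.Ioo (-1:ℝ) 1, ‖h₁ x‖ ≤ K₁ := by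
    intro x hx
    obtain ⟨hx1, hx2⟩ := hx
    have hp : 0 < 1 + x := by linarith
    have hq : 0 < 1 - x := by linarith
    have e1 : ‖h₁ x‖ = ‖f₁ x‖ * ‖W x‖⁻¹ * ‖g x‖ := hnorm_eq f₁ x
    have hfb := (hbnd x ⟨hx1, hx2⟩).2.2.1
    have hA : (0:ℝ) ≤ C * (1 + x)⁻¹ := mul_nonneg hC.le (inv_nonneg.mpr hp.le)
    have hB : (0:ℝ) ≤ (1 + x) ^ 2 * (1 - x) ^ 2 / c := by positivity
    rw [e1]
    calc ‖f₁ x‖ * ‖W x‖⁻¹ * ‖g x‖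
        ≤ (C * (1 + x)⁻¹) * ((1 + x) ^ 2 * (1 - x) ^ 2 / c) * (M / ((1 + x) * (1 - x) ^ 2)) :=
          mul_le_mul (mul_le_mul hfb (hWinv x ⟨hx1, hx2⟩) (inv_nonneg.mpr (norm_nonneg _)) hA)
            (hgx x ⟨hx1, hx2⟩) (norm_nonneg _) (mul_nonneg hA hB)
      _ = K₁ := by rw [hK₁def]; field_simp
  have hb₂ : ∀ x ∈ Set.Ioo (-1:ℝ) 1, ‖h₂ x‖ ≤ K₂ := by
    intro x hx
    obtain ⟨hx1, hx2⟩ := hx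
    have hp : 0 < 1 + x := by linarith
    have hq : 0 < 1 - x := by linarith
    have e1 : ‖h₂ x‖ = ‖fm₁ x‖ * ‖W x‖⁻¹ * ‖g x‖ := hnorm_eq fm₁ x
    have hfb := (hbnd x ⟨hx1, hx2⟩).1
    have hB : (0:ℝ) ≤ (1 + x) ^ 2 * (1 - x) ^ 2 / c := by positivity
    rw [e1]
    calc ‖fm₁ x‖ * ‖W x‖⁻¹ * ‖g x‖
        ≤ C * ((1 + x) ^ 2 * (1 - x) ^ 2 / c) * (M / ((1 + x) * (1 - x) ^ 2)) :=
          mul_le_mul (mul_le_mul hfb (hWinv x ⟨hx1, hx2⟩) (inv_nonneg.mpr (norm_nonneg _)) hC.le)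
            (hgx x ⟨hx1, hx2⟩) (norm_nonneg _) (mul_nonneg hC.le hB)
      _ = C * M / c * (1 + x) := by field_simp
      _ ≤ C * M / c * 2 :=
          mul_le_mul_of_nonneg_left (by linarith) (div_nonneg (mul_nonneg hC.le hM0) hc.le)
      _ = K₂ := by rw [hK₂def]; ring
  set F : ℝ → ℂ := fun t => ∫ x in t..1, h₁ x with hF_def
  set G : ℝ → ℂ := fun t => ∫ x in (-1:ℝ)..t, h₂ x with hG_def
  have hvc : ∀ t, varConst f₁ fm₁ W g t = fm₁ t * F t + f₁ t * G t := fun t => rfl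
  have hFbd : ∀ t, -1 ≤ t → t ≤ 1 → ‖F t‖ ≤ K₁ * (1 - t) := by
    intro t ht1 ht2
    exact aux_norm_le ht2 ht1 le_rfl hb₁
  have hGbd : ∀ t, -1 ≤ t → t ≤ 1 → ‖G t‖ ≤ K₂ * (t + 1) := by
    intro t ht1 ht2
    calc ‖G t‖ ≤ K₂ * (t - -1) := aux_norm_le ht1 le_rfl ht2 hb₂
      _ = K₂ * (t + 1) := by ring
  -- sup-norm bound
  have hsup : ∀ t ∈ Set.Ioo (-1:ℝ) 1, ‖varConst f₁ fm₁ W g t‖ ≤ 4 * C ^ 2 * M / c := by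
    intro t ht
    obtain ⟨ht1, ht2⟩ := ht
    have hp : 0 < 1 + t := by linarith
    rw [hvc]
    calc ‖fm₁ t * F t + f₁ t * G t‖ ≤ ‖fm₁ t‖ * ‖F t‖ + ‖f₁ t‖ * ‖G t‖ := by
          refine le_trans (norm_add_le _ _) ?_
          rw [norm_mul, norm_mul]
      _ ≤ C * (K₁ * (1 - t)) + (C * (1 + t)⁻¹) * (K₂ * (t + 1)) := by
          have hA : (0:ℝ) ≤ C * (1 + t)⁻¹ := mul_nonneg hC.le (inv_nonneg.mpr hp.le)
          exact add_le_add
            (mul_le_mul (hbnd t ⟨ht1, ht2⟩).1 (hFbd t ht1.le ht2.le) (norm_nonneg _) hC.le)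
            (mul_le_mul (hbnd t ⟨ht1, ht2⟩).2.2.1 (hGbd t ht1.le ht2.le) (norm_nonneg _) hA)
      _ ≤ C * K₁ * 2 + C * K₂ := by
          have he : (C * (1 + t)⁻¹) * (K₂ * (t + 1)) = C * K₂ := by field_simp; ring
          rw [he]
          have h5 : C * (K₁ * (1 - t)) ≤ C * K₁ * 2 := by
            nlinarith [mul_nonneg (mul_nonneg hC.le hK₁0) hp.le]
          linarith
      _ = 4 * C ^ 2 * M / c := by rw [hK₁def, hK₂def]; field_simp; ring
  -- derivative bound
  have hder : ∀ t ∈ Set.Ioo (-1:ℝ) 1,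
      (1 - t ^ 2) * ‖deriv (varConst f₁ fm₁ W g) t‖ ≤ 21 * C ^ 2 * M / c := by
    intro t ht
    obtain ⟨ht1, ht2⟩ := ht
    have hp : 0 < 1 + t := by linarith
    have hq : 0 < 1 - t := by linarith
    set Ld : ℝ := 4 * C * K₁ / (1 - t) + C * K₁ + 3 * C * K₂ / (1 + t) with hLd_def
    have hBf0 : (0:ℝ) ≤ 4 * C * K₁ / (1 - t) + C * K₁ :=
      add_nonneg (div_nonneg (mul_nonneg (by linarith) hK₁0) hq.le) (mul_nonneg hC.le hK₁0)
    have hBg0 : (0:ℝ) ≤ 3 * C * K₂ / (1 + t) :=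
      div_nonneg (mul_nonneg (by linarith) hK₂0) hp.le
    have hLd0 : 0 ≤ Ld := by rw [hLd_def]; linarith
    have hderle : ‖deriv (varConst f₁ fm₁ W g) t‖ ≤ Ld := by
      apply deriv_norm_le hLd0
      intro hd
      set δ : ℝ := min ((1 - t) / 2) (1 + t) with hδ_def
      have hδ0 : 0 < δ := lt_min (by linarith) (by linarith)
      have hδ1 : δ ≤ (1 - t) / 2 := min_le_left _ _
      have hδ2 : δ ≤ 1 + t := min_le_right _ _
      have hmem : Set.Ioo t (t + δ) ∈ 𝓝[>] t :=
        Ioo_mem_nhdsGT_of_mem ⟨le_rfl, by linarith⟩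
      have hsubIoo : ∀ y' ∈ Set.Ioo t (t + δ), Set.Icc t y' ⊆ Set.Ioo (-1:ℝ) 1 := by
        intro y' hy' x hx
        exact ⟨by linarith [hx.1], by linarith [hx.2, hy'.2]⟩
      have hLip₁ : ∀ y' ∈ Set.Ioo t (t + δ),
          ‖fm₁ y' - fm₁ t‖ ≤ (4 * C / (1 - t) ^ 2) * (y' - t) := by
        intro y' hy'
        have hsub := hsubIoo y' hy'
        exact norm_image_sub_le_of_norm_deriv_le_segment' (f := fm₁) (a := t) (b := y')
          (f' := deriv fm₁) (C := 4 * C / (1 - t) ^ 2)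
          (fun x hx => ((hdm x (hsub hx)).hasDerivAt).hasDerivWithinAt)
          (fun x hx => by
            have hb := (hbnd x (hsub (Set.Ico_subset_Icc_self hx))).2.1
            have hx2 : (1 - t) / 2 ≤ 1 - x := by linarith [hx.2, hy'.2]
            refine le_trans hb ?_
            have hsq : ((1 - t) / 2) ^ 2 ≤ (1 - x) ^ 2 := by nlinarith
            calc C * ((1 - x) ^ 2)⁻¹ ≤ C * (((1 - t) / 2) ^ 2)⁻¹ :=
                  mul_le_mul_of_nonneg_left (inv_anti₀ (by positivity) hsq) hC.le
              _ = 4 * C / (1 - t) ^ 2 := by field_simp; ring)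
          y' ⟨hy'.1.le, le_rfl⟩
      have hLip₂ : ∀ y' ∈ Set.Ioo t (t + δ),
          ‖f₁ y' - f₁ t‖ ≤ (C / (1 + t) ^ 2) * (y' - t) := by
        intro y' hy'
        have hsub := hsubIoo y' hy'
        exact norm_image_sub_le_of_norm_deriv_le_segment' (f := f₁) (a := t) (b := y')
          (f' := deriv f₁) (C := C / (1 + t) ^ 2)
          (fun x hx => ((hdf x (hsub hx)).hasDerivAt).hasDerivWithinAt)
          (fun x hx => by
            have hb := (hbnd x (hsub (Set.Ico_subset_Icc_self hx))).2.2.2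
            refine le_trans hb ?_
            have hsq : (1 + t) ^ 2 ≤ (1 + x) ^ 2 := by nlinarith [hx.1]
            calc C * ((1 + x) ^ 2)⁻¹ ≤ C * ((1 + t) ^ 2)⁻¹ :=
                  mul_le_mul_of_nonneg_left (inv_anti₀ (by positivity) hsq) hC.le
              _ = C / (1 + t) ^ 2 := by rw [div_eq_mul_inv])
          y' ⟨hy'.1.le, le_rfl⟩
      -- F part
      have hF : ∀ᶠ y' in 𝓝[>] t,
          ‖fm₁ y' * F y' - fm₁ t * F t‖ ≤ (4 * C * K₁ / (1 - t) + C * K₁) * (y' - t) := by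
        by_cases hI : IntegrableOn h₁ (Set.Ioc t 1) volume
        · filter_upwards [hmem] with y' hy'
          have hty' : t < y' := hy'.1
          have hy'1 : y' < 1 := by linarith [hy'.2]
          have hi1 : IntervalIntegrable h₁ volume t y' :=
            (intervalIntegrable_iff_integrableOn_Ioc_of_le hty'.le).mpr
              (hI.mono_set (Set.Ioc_subset_Ioc_right hy'1.le))
          have hi2 : IntervalIntegrable h₁ volume y' 1 :=
            (intervalIntegrable_iff_integrableOn_Ioc_of_le hy'1.le).mpr
              (hI.mono_set (Set.Ioc_subset_Ioc_left hty'.le))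
          have hsplit : (∫ x in t..y', h₁ x) + F y' = F t :=
            intervalIntegral.integral_add_adjacent_intervals hi1 hi2
          have hdiff : F y' - F t = -(∫ x in t..y', h₁ x) := by
            rw [← hsplit]; ring
          have hFdiff : ‖F y' - F t‖ ≤ K₁ * (y' - t) := by
            rw [hdiff, norm_neg]
            exact aux_norm_le hty'.le ht1.le hy'1.le hb₁
          have hyt : (0:ℝ) ≤ y' - t := by linarith
          have hA : (0:ℝ) ≤ (4 * C / (1 - t) ^ 2) * (y' - t) :=
            mul_nonneg (div_nonneg (by linarith) (sq_nonneg _)) hyt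
          have hFy' : ‖F y'‖ ≤ K₁ * (1 - t) :=
            le_trans (hFbd y' (by linarith) hy'1.le)
              (by nlinarith [mul_nonneg hK₁0 hyt])
          calc ‖fm₁ y' * F y' - fm₁ t * F t‖
              = ‖(fm₁ y' - fm₁ t) * F y' + fm₁ t * (F y' - F t)‖ := by congr 1; ring
            _ ≤ ‖fm₁ y' - fm₁ t‖ * ‖F y'‖ + ‖fm₁ t‖ * ‖F y' - F t‖ := by
                refine le_trans (norm_add_le _ _) ?_
                rw [norm_mul, norm_mul]
            _ ≤ ((4 * C / (1 - t) ^ 2) * (y' - t)) * (K₁ * (1 - t)) + C * (K₁ * (y' - t)) :=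
                add_le_add
                  (mul_le_mul (hLip₁ y' hy') hFy' (norm_nonneg _) hA)
                  (mul_le_mul (hbnd t ⟨ht1, ht2⟩).1 hFdiff (norm_nonneg _) hC.le)
            _ = (4 * C * K₁ / (1 - t) + C * K₁) * (y' - t) := by field_simp
        · have hcon : ∃ z ∈ Set.Ioo t 1, ¬ IntegrableOn h₁ (Set.Ioc z 1) volume := by
            by_contra hcc
            push_neg at hcc
            exact hI (aux_tail_integrable ⟨ht1, ht2⟩ hb₁ hcc)
          obtain ⟨z, hz, hzni⟩ := hcon
          filter_upwards [Ioo_mem_nhdsGT_of_mem ⟨le_rfl, hz.1⟩] with y' hy'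
          have hFy' : F y' = 0 := by
            show (∫ x in y'..1, h₁ x) = 0
            rw [intervalIntegral.integral_of_le (by linarith [hy'.2, hz.2] : y' ≤ 1)]
            exact MeasureTheory.integral_undef
              (fun hcc => hzni (IntegrableOn.mono_set hcc (Set.Ioc_subset_Ioc_left hy'.2.le)))
          have hFt : F t = 0 := by
            show (∫ x in t..1, h₁ x) = 0
            rw [intervalIntegral.integral_of_le ht2.le]
            exact MeasureTheory.integral_undef hI
          rw [hFy', hFt, mul_zero, mul_zero, sub_zero, norm_zero]
          exact mul_nonneg hBf0 (by linarith [hy'.1])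
      -- G part
      have hG : ∀ᶠ y' in 𝓝[>] t,
          ‖f₁ y' * G y' - f₁ t * G t‖ ≤ (3 * C * K₂ / (1 + t)) * (y' - t) := by
        by_cases hJ : ∃ z ∈ Set.Ioo t 1, IntegrableOn h₂ (Set.Ioc (-1:ℝ) z) volume
        · obtain ⟨z, hz, hzi⟩ := hJ
          filter_upwards [Ioo_mem_nhdsGT_of_mem ⟨le_rfl, hz.1⟩, hmem] with y' hy' hy'δ
          have hty' : t < y' := hy'.1
          have hy'1 : y' < 1 := by linarith [hy'.2, hz.2]
          have hi1 : IntervalIntegrable h₂ volume (-1) t :=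
            (intervalIntegrable_iff_integrableOn_Ioc_of_le ht1.le).mpr
              (hzi.mono_set (Set.Ioc_subset_Ioc_right hz.1.le))
          have hi2 : IntervalIntegrable h₂ volume t y' :=
            (intervalIntegrable_iff_integrableOn_Ioc_of_le hty'.le).mpr
              (hzi.mono_set (Set.Ioc_subset_Ioc ht1.le hy'.2.le))
          have hsplit : G t + (∫ x in t..y', h₂ x) = G y' :=
            intervalIntegral.integral_add_adjacent_intervals hi1 hi2
          have hGdiff : ‖G y' - G t‖ ≤ K₂ * (y' - t) := by
            have he : G y' - G t = ∫ x in t..y', h₂ x := by rw [← hsplit]; ring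
            rw [he]
            exact aux_norm_le hty'.le ht1.le hy'1.le hb₂
          have hyt : (0:ℝ) ≤ y' - t := by linarith
          have hA : (0:ℝ) ≤ (C / (1 + t) ^ 2) * (y' - t) :=
            mul_nonneg (div_nonneg hC.le (sq_nonneg _)) hyt
          have hA2 : (0:ℝ) ≤ C * (1 + t)⁻¹ := mul_nonneg hC.le (inv_nonneg.mpr hp.le)
          have hGy' : ‖G y'‖ ≤ K₂ * (2 * (1 + t)) := by
            refine le_trans (hGbd y' (by linarith) hy'1.le) ?_
            have h6 : (0:ℝ) ≤ 2 * (1 + t) - (y' + 1) := by linarith [hy'δ.2, hδ2]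
            nlinarith [mul_nonneg hK₂0 h6]
          calc ‖f₁ y' * G y' - f₁ t * G t‖
              = ‖(f₁ y' - f₁ t) * G y' + f₁ t * (G y' - G t)‖ := by congr 1; ring
            _ ≤ ‖f₁ y' - f₁ t‖ * ‖G y'‖ + ‖f₁ t‖ * ‖G y' - G t‖ := by
                refine le_trans (norm_add_le _ _) ?_
                rw [norm_mul, norm_mul]
            _ ≤ ((C / (1 + t) ^ 2) * (y' - t)) * (K₂ * (2 * (1 + t)))
                  + (C * (1 + t)⁻¹) * (K₂ * (y' - t)) :=
                add_le_add
                  (mul_le_mul (hLip₂ y' hy'δ) hGy' (norm_nonneg _) hA)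
                  (mul_le_mul (hbnd t ⟨ht1, ht2⟩).2.2.1 hGdiff (norm_nonneg _) hA2)
            _ = (3 * C * K₂ / (1 + t)) * (y' - t) := by field_simp; ring
        · push_neg at hJ
          have hG0 : ∀ y' ∈ Set.Ioo t (t + δ), G y' = 0 := by
            intro y' hy'
            show (∫ x in (-1:ℝ)..y', h₂ x) = 0
            rw [intervalIntegral.integral_of_le (by linarith [hy'.1] : (-1:ℝ) ≤ y')]
            exact MeasureTheory.integral_undef (hJ y' ⟨hy'.1, by linarith [hy'.2]⟩)
          have hcont : Tendsto (varConst f₁ fm₁ W g) (𝓝[>] t)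
              (𝓝 (varConst f₁ fm₁ W g t)) :=
            (hd.continuousAt.tendsto).mono_left nhdsWithin_le_nhds
          have hFlim : Tendsto (fun y' => fm₁ y' * F y') (𝓝[>] t) (𝓝 (fm₁ t * F t)) := by
            have hz0 : Tendsto (fun y' => fm₁ y' * F y' - fm₁ t * F t) (𝓝[>] t) (𝓝 0) := by
              apply squeeze_zero_norm' hF
              have h7 : Tendsto (fun y' : ℝ => (4 * C * K₁ / (1 - t) + C * K₁) * (y' - t))
                  (𝓝 t) (𝓝 ((4 * C * K₁ / (1 - t) + C * K₁) * (t - t))) :=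
                (continuous_const.mul (continuous_id.sub continuous_const)).tendsto t
              rw [sub_self, mul_zero] at h7
              exact h7.mono_left nhdsWithin_le_nhds
            have h8 := hz0.add (tendsto_const_nhds (x := fm₁ t * F t))
            simpa using h8
          have hphiEq : (fun y' => fm₁ y' * F y') =ᶠ[𝓝[>] t] varConst f₁ fm₁ W g := by
            filter_upwards [hmem] with y' hy'
            rw [hvc, hG0 y' hy', mul_zero, add_zero]
          have huniq : varConst f₁ fm₁ W g t = fm₁ t * F t :=
            tendsto_nhds_unique hcont (hFlim.congr' hphiEq)
          have hGt0 : f₁ t * G t = 0 := by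
            have h9 : fm₁ t * F t + f₁ t * G t = fm₁ t * F t := by rw [← hvc, huniq]
            calc f₁ t * G t = (fm₁ t * F t + f₁ t * G t) - fm₁ t * F t := by ring
              _ = 0 := by rw [h9]; ring
          filter_upwards [hmem] with y' hy'
          rw [hG0 y' hy', mul_zero, zero_sub, norm_neg, hGt0, norm_zero]
          exact mul_nonneg hBg0 (by linarith [hy'.1])
      -- combine
      filter_upwards [hF, hG] with y' h1 h2
      calc ‖varConst f₁ fm₁ W g y' - varConst f₁ fm₁ W g t‖
          = ‖(fm₁ y' * F y' - fm₁ t * F t) + (f₁ y' * G y' - f₁ t * G t)‖ := by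
            rw [hvc, hvc]; congr 1; ring
        _ ≤ ‖fm₁ y' * F y' - fm₁ t * F t‖ + ‖f₁ y' * G y' - f₁ t * G t‖ := norm_add_le _ _
        _ ≤ (4 * C * K₁ / (1 - t) + C * K₁) * (y' - t)
              + (3 * C * K₂ / (1 + t)) * (y' - t) := add_le_add h1 h2
        _ = Ld * (y' - t) := by rw [hLd_def]; ring
    have hfinal : (1 - t ^ 2) * Ld ≤ 21 * C ^ 2 * M / c := by
      have hexp : (1 - t ^ 2) * Ld
          = C ^ 2 * M / c * (4 * (1 + t) + (1 - t ^ 2) + 6 * (1 - t)) := by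
        rw [hLd_def, hK₁def, hK₂def]
        field_simp
        ring
      rw [hexp]
      have hcoef : 4 * (1 + t) + (1 - t ^ 2) + 6 * (1 - t) ≤ 21 := by nlinarith
      calc C ^ 2 * M / c * (4 * (1 + t) + (1 - t ^ 2) + 6 * (1 - t))
          ≤ C ^ 2 * M / c * 21 :=
            mul_le_mul_of_nonneg_left hcoef
              (div_nonneg (mul_nonneg (sq_nonneg C) hM0) hc.le)
        _ = 21 * C ^ 2 * M / c := by ring
    calc (1 - t ^ 2) * ‖deriv (varConst f₁ fm₁ W g) t‖ ≤ (1 - t ^ 2) * Ld :=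
          mul_le_mul_of_nonneg_left hderle (by nlinarith)
      _ ≤ 21 * C ^ 2 * M / c := hfinal
  -- assemble
  rw [Xnorm]
  have hbound1 : sSup ((fun y => (1 - y ^ 2) * ‖deriv (varConst f₁ fm₁ W g) y‖) ''
      Set.Ioo (-1:ℝ) 1) ≤ 21 * C ^ 2 * M / c := by
    apply Real.sSup_le
    · rintro v ⟨y, hy, rfl⟩
      exact hder y hy
    · exact div_nonneg (mul_nonneg (mul_nonneg (by norm_num) (sq_nonneg C)) hM0) hc.le
  have hbound2 : sSup ((fun y => ‖varConst f₁ fm₁ W g y‖) '' Set.Ioo (-1:ℝ) 1)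
      ≤ 4 * C ^ 2 * M / c := by
    apply Real.sSup_le
    · rintro v ⟨y, hy, rfl⟩
      exact hsup y hy
    · exact div_nonneg (mul_nonneg (mul_nonneg (by norm_num) (sq_nonneg C)) hM0) hc.le
  calc sSup ((fun y => (1 - y ^ 2) * ‖deriv (varConst f₁ fm₁ W g) y‖) '' Set.Ioo (-1:ℝ) 1)
        + sSup ((fun y => ‖varConst f₁ fm₁ W g y‖) '' Set.Ioo (-1:ℝ) 1)
      ≤ 21 * C ^ 2 * M / c + 4 * C ^ 2 * M / c := add_le_add hbound1 hbound2
    _ = 25 * C ^ 2 / c * M := by ring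
end
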